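/- For all strings x, y ∈ Σ_k^n of the same length n, the edit distance satisfies d_E(x,y) = min over s ∈ {0,…,n} and over all pairs of strictly increasing (strictly monotone) maps I, J : Fin s → Fin n of the quantity 2·(n−s) + #{ℓ ∈ Fin s : x(I ℓ) ≠ y(J ℓ)}. (In particular the minimum is attained, since s = 0 with the empty maps gives the value 2n ≥ d_E(x,y).) -/

import Mathlib

/-- Costs of the edit operations (restored from the older Mathlib, where it was removed). -/
structure Levenshtein.Cost (α β δ : Type*) where
  /-- Cost to delete an element from a list. -/
  delete : α → δ
  /-- Cost in insert an element into a list. -/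
  insert : β → δ
  /-- Cost to substitute one element for another in a list. -/
  substitute : α → β → δ

/-- The default cost structure (restored from the older Mathlib). -/
@[simps]
def Levenshtein.defaultCost {α : Type*} [DecidableEq α] : Levenshtein.Cost α α ℕ where
  delete _ := 1
  insert _ := 1
  substitute a b := if a = b then 0 else 1

/-- Helper for `suffixLevenshtein` (restored from the older Mathlib). -/
def Levenshtein.impl {α β δ : Type*} [Zero δ] [Min δ] [Add δ]
    (C : Levenshtein.Cost α β δ)
    (xs : List α) (y : β) (d : {r : List δ // 0 < r.length}) : {r : List δ // 0 < r.length} :=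
  let ⟨ds, w⟩ := d
  xs.zip (ds.zip ds.tail) |>.foldr
    (init := ⟨[C.insert y + ds.getLast (List.length_pos_iff.mp w)], by simp⟩)
    (fun ⟨x, d₀, d₁⟩ ⟨r, w⟩ =>
      ⟨min (C.delete x + r[0]) (min (C.insert y + d₀) (C.substitute x y + d₁)) :: r, by simp⟩)

/-- `suffixLevenshtein C xs ys` computes the Levenshtein distance between each suffix of `xs`
and `ys` (restored from the older Mathlib). -/
def suffixLevenshtein {α β δ : Type*} [Zero δ] [Min δ] [Add δ]
    (C : Levenshtein.Cost α β δ) (xs : List α) (ys : List β) :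
    {r : List δ // 0 < r.length} :=
  ys.foldr
    (Levenshtein.impl C xs)
    (xs.foldr (init := ⟨[0], by simp⟩) (fun a ⟨r, w⟩ => ⟨(C.delete a + r[0]) :: r, by simp⟩))

/-- The Levenshtein distance (restored from the older Mathlib). -/
def levenshtein {α β δ : Type*} [Zero δ] [Min δ] [Add δ]
    (C : Levenshtein.Cost α β δ) (xs : List α) (ys : List β) : δ :=
  let ⟨r, w⟩ := suffixLevenshtein C xs ys
  r[0]

/-- Edit distance between two strings over `Fin k`, with unit costs for
substitution, deletion and insertion, and cost `0` for a match. -/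
def editDist {k : ℕ} (x y : List (Fin k)) : ℕ :=
  levenshtein Levenshtein.defaultCost x y

namespace EditAux

def levSpec {α β δ : Type*} [Zero δ] [Min δ] [Add δ] (C : Levenshtein.Cost α β δ) :
    List α → List β → δ
  | [], [] => 0
  | [], y :: ys => C.insert y + levSpec C [] ys
  | x :: xs, [] => C.delete x + levSpec C xs []
  | x :: xs, y :: ys => min (C.delete x + levSpec C xs (y :: ys))
      (min (C.insert y + levSpec C (x :: xs) ys) (C.substitute x y + levSpec C xs ys))
termination_by xs ys => xs.length + ys.length

def specList {α β δ : Type*} [Zero δ] [Min δ] [Add δ] (C : Levenshtein.Cost α β δ)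
    (ys : List β) : List α → List δ
  | [] => [levSpec C [] ys]
  | x :: xs => levSpec C (x :: xs) ys :: specList C ys xs

lemma specList_pos {α β δ : Type*} [Zero δ] [Min δ] [Add δ] (C : Levenshtein.Cost α β δ)
    (ys : List β) (xs : List α) : 0 < (specList C ys xs).length := by
  cases xs <;> simp [specList]

lemma specList_zero {α β δ : Type*} [Zero δ] [Min δ] [Add δ] (C : Levenshtein.Cost α β δ)
    (ys : List β) (xs : List α) (h : 0 < (specList C ys xs).length) :
    (specList C ys xs)[0]'h = levSpec C xs ys := by
  cases xs <;> rfl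

lemma impl_cons {α β δ : Type*} [Zero δ] [Min δ] [Add δ] (C : Levenshtein.Cost α β δ)
    {x : α} {xs : List α} {y : β} {d : δ} {ds : List δ} (w : 0 < (d :: ds).length)
    (w' : 0 < ds.length) :
    (Levenshtein.impl C (x :: xs) y ⟨d :: ds, w⟩).1 =
      min (C.delete x + (Levenshtein.impl C xs y ⟨ds, w'⟩).1[0]'(Levenshtein.impl C xs y ⟨ds, w'⟩).2)
        (min (C.insert y + d) (C.substitute x y + ds[0])) :: (Levenshtein.impl C xs y ⟨ds, w'⟩).1 :=
  match ds, w' with | _ :: _, _ => rfl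

lemma impl_spec {α β δ : Type*} [Zero δ] [Min δ] [Add δ] (C : Levenshtein.Cost α β δ)
    (y : β) (ys : List β) : ∀ (xs : List α) (d : {r : List δ // 0 < r.length}),
    d.1 = specList C ys xs → (Levenshtein.impl C xs y d).1 = specList C (y :: ys) xs
  | [], ⟨_, _⟩, rfl => by simp [Levenshtein.impl, specList, levSpec]
  | x :: xs, ⟨_, _⟩, rfl => by
    have ih := impl_spec C y ys xs ⟨specList C ys xs, specList_pos C ys xs⟩ rfl
    rw [specList, impl_cons C _ (specList_pos C ys xs)]
    generalize hI : Levenshtein.impl C xs y ⟨specList C ys xs, specList_pos C ys xs⟩ = I at *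
    obtain ⟨r, hr⟩ := I
    simp only at ih
    subst ih
    simp only [specList_zero, specList]
    rw [levSpec]

lemma suffix_spec {α β δ : Type*} [Zero δ] [Min δ] [Add δ] (C : Levenshtein.Cost α β δ)
    (xs : List α) (ys : List β) : (suffixLevenshtein C xs ys).1 = specList C ys xs := by
  induction ys with
  | nil =>
    unfold suffixLevenshtein
    simp only [List.foldr_nil]
    induction xs with
    | nil => simp [specList, levSpec]
    | cons a xs ih =>
      simp only [List.foldr_cons]
      generalize hp : List.foldr _ _ xs = p at *
      obtain ⟨r, hr⟩ := p
      simp only at ih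
      subst ih
      simp only [specList_zero, specList]
      rw [levSpec.eq_3]
  | cons y ys ih =>
    exact impl_spec C y ys xs _ ih

lemma levenshtein_eq_spec {α β δ : Type*} [Zero δ] [Min δ] [Add δ] (C : Levenshtein.Cost α β δ)
    (xs : List α) (ys : List β) : levenshtein C xs ys = levSpec C xs ys := by
  have h := suffix_spec C xs ys
  unfold levenshtein
  generalize suffixLevenshtein C xs ys = p at *
  obtain ⟨r, hr⟩ := p
  simp only at h
  subst h
  exact specList_zero C ys xs hr

end EditAux

section
variable {α β δ : Type*} [Zero δ] [Min δ] [Add δ] (C : Levenshtein.Cost α β δ)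

@[simp] theorem levenshtein_nil_nil : levenshtein C ([] : List α) ([] : List β) = 0 := by
  rw [EditAux.levenshtein_eq_spec, EditAux.levSpec]

@[simp] theorem levenshtein_nil_cons (y : β) (ys : List β) :
    levenshtein C ([] : List α) (y :: ys) = C.insert y + levenshtein C [] ys := by
  rw [EditAux.levenshtein_eq_spec, EditAux.levenshtein_eq_spec, EditAux.levSpec]

@[simp] theorem levenshtein_cons_nil (x : α) (xs : List α) :
    levenshtein C (x :: xs) ([] : List β) = C.delete x + levenshtein C xs [] := by
  rw [EditAux.levenshtein_eq_spec, EditAux.levenshtein_eq_spec, EditAux.levSpec]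

@[simp] theorem levenshtein_cons_cons (x : α) (xs : List α) (y : β) (ys : List β) :
    levenshtein C (x :: xs) (y :: ys) =
      min (C.delete x + levenshtein C xs (y :: ys))
        (min (C.insert y + levenshtein C (x :: xs) ys) (C.substitute x y + levenshtein C xs ys)) := by
  simp only [EditAux.levenshtein_eq_spec]
  rw [EditAux.levSpec]

end


namespace EditAux

variable {k : ℕ}


inductive A : List (Fin k) → List (Fin k) → ℕ → Prop
  | nil : A [] [] 0
  | left (a : Fin k) {x y : List (Fin k)} {c : ℕ} : A x y c → A (a :: x) y (c + 1)
  | right (b : Fin k) {x y : List (Fin k)} {c : ℕ} : A x y c → A x (b :: y) (c + 1)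
  | pair (a b : Fin k) {x y : List (Fin k)} {c : ℕ} :
      A x y c → A (a :: x) (b :: y) (c + if a = b then 0 else 1)

lemma A.cast {x y : List (Fin k)} {c c' : ℕ} (h : A x y c) (e : c = c') : A x y c' := e ▸ h

lemma lev_del (a : Fin k) (x y : List (Fin k)) : editDist (a :: x) y ≤ editDist x y + 1 := by
  cases y with
  | nil => simp [editDist, Levenshtein.defaultCost, Nat.add_comm]
  | cons b ys =>
      simpa [editDist, Levenshtein.defaultCost, Nat.add_comm] using
        (min_le_left _ _ : min (1 + levenshtein Levenshtein.defaultCost x (b :: ys)) _ ≤ _)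

lemma lev_ins (b : Fin k) (x y : List (Fin k)) : editDist x (b :: y) ≤ editDist x y + 1 := by
  cases x with
  | nil => simp [editDist, Levenshtein.defaultCost, Nat.add_comm]
  | cons a xs =>
      calc editDist (a :: xs) (b :: y)
          ≤ 1 + editDist (a :: xs) y := by
            simpa [editDist, Levenshtein.defaultCost] using
              le_trans (min_le_right _ _) (min_le_left _ _)
        _ = editDist (a :: xs) y + 1 := Nat.add_comm _ _

lemma lev_sub (a b : Fin k) (x y : List (Fin k)) :
    editDist (a :: x) (b :: y) ≤ editDist x y + (if a = b then 0 else 1) := by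
  calc editDist (a :: x) (b :: y)
      ≤ (if a = b then 0 else 1) + editDist x y := by
        simpa [editDist, Levenshtein.defaultCost] using
          le_trans (min_le_right _ _) (min_le_right _ _)
    _ = _ := Nat.add_comm _ _

lemma editDist_le_of_A {x y : List (Fin k)} {c : ℕ} (h : A x y c) : editDist x y ≤ c := by
  induction h with
  | nil => simp [editDist]
  | left a _ ih => exact le_trans (lev_del _ _ _) (by omega)
  | right b _ ih => exact le_trans (lev_ins _ _ _) (by omega)
  | pair a b _ ih => exact le_trans (lev_sub _ _ _ _) (by by_cases h : a = b <;> simp [h] <;> omega)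

lemma A_editDist (x y : List (Fin k)) : A x y (editDist x y) := by
  induction x generalizing y with
  | nil =>
    induction y with
    | nil => simpa [editDist] using A.nil
    | cons b ys ih =>
        have e : editDist ([] : List (Fin k)) (b :: ys) = editDist [] ys + 1 := by
          simp [editDist, Levenshtein.defaultCost, Nat.add_comm]
        exact (A.right b ih).cast e.symm
  | cons a xs ihx =>
    induction y with
    | nil =>
        have e : editDist (a :: xs) ([] : List (Fin k)) = editDist xs [] + 1 := by
          simp [editDist, Levenshtein.defaultCost, Nat.add_comm]
        exact (A.left a (ihx [])).cast e.symm
    | cons b ys ihy =>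
        have e : editDist (a :: xs) (b :: ys) =
            min (editDist xs (b :: ys) + 1)
              (min (editDist (a :: xs) ys + 1) (editDist xs ys + if a = b then 0 else 1)) := by
          simp [editDist, Levenshtein.defaultCost, Nat.add_comm]
        rw [e]
        rcases le_or_gt (editDist xs (b :: ys) + 1)
            (min (editDist (a :: xs) ys + 1) (editDist xs ys + if a = b then 0 else 1)) with h | h
        · rw [min_eq_left h]; exact A.left a (ihx (b :: ys))
        · rw [min_eq_right h.le]
          rcases le_or_gt (editDist (a :: xs) ys + 1) (editDist xs ys + if a = b then 0 else 1) with h2 | h2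
          · rw [min_eq_left h2]; exact A.right b ihy
          · rw [min_eq_right h2.le]; exact A.pair a b (ihx ys)

lemma le_of_strictMono {s m : ℕ} {f : Fin s → Fin m} (h : StrictMono f) : s ≤ m := by
  simpa using Fintype.card_le_of_injective f h.injective

lemma strictMono_cons_zero {s m : ℕ} {I : Fin s → Fin m} (hI : StrictMono I) :
    StrictMono (Fin.cons (0 : Fin (m + 1)) (Fin.succ ∘ I) : Fin (s + 1) → Fin (m + 1)) := by
  intro i j hij
  induction i using Fin.cases with
  | zero =>
    induction j using Fin.cases with
    | zero => exact absurd hij (lt_irrefl _)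
    | succ j => simpa using Fin.succ_pos _
  | succ i =>
    induction j using Fin.cases with
    | zero => exact absurd hij (Fin.not_lt_zero _)
    | succ j =>
      simp only [Fin.cons_succ, Function.comp_apply]
      exact Fin.succ_lt_succ_iff.mpr (hI (Fin.succ_lt_succ_iff.mp hij))

lemma align_of_A {x y : List (Fin k)} {c : ℕ} (h : A x y c) :
    ∃ s : ℕ, ∃ I : Fin s → Fin x.length, ∃ J : Fin s → Fin y.length,
      StrictMono I ∧ StrictMono J ∧
      c = (x.length - s) + (y.length - s) +
        ∑ ℓ, if x.get (I ℓ) ≠ y.get (J ℓ) then 1 else 0 := by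
  induction h with
  | nil =>
      exact ⟨0, Fin.elim0, Fin.elim0, fun i => i.elim0, fun i => i.elim0, by simp⟩
  | @left a x y c _ ih =>
      obtain ⟨s, I, J, hI, hJ, hc⟩ := ih
      refine ⟨s, Fin.succ ∘ I, J, Fin.strictMono_succ.comp hI, hJ, ?_⟩
      have hs : s ≤ x.length := le_of_strictMono hI
      have hsum : (∑ ℓ, if (a :: x).get ((Fin.succ ∘ I) ℓ) ≠ y.get (J ℓ) then 1 else 0)
          = ∑ ℓ, if x.get (I ℓ) ≠ y.get (J ℓ) then 1 else 0 := rfl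
      rw [hsum, List.length_cons]
      omega
  | @right b x y c _ ih =>
      obtain ⟨s, I, J, hI, hJ, hc⟩ := ih
      refine ⟨s, I, Fin.succ ∘ J, hI, Fin.strictMono_succ.comp hJ, ?_⟩
      have hs : s ≤ y.length := le_of_strictMono hJ
      have hsum : (∑ ℓ, if x.get (I ℓ) ≠ (b :: y).get ((Fin.succ ∘ J) ℓ) then 1 else 0)
          = ∑ ℓ, if x.get (I ℓ) ≠ y.get (J ℓ) then 1 else 0 := rfl
      rw [hsum, List.length_cons]
      omega
  | @pair a b x y c _ ih =>
      obtain ⟨s, I, J, hI, hJ, hc⟩ := ih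
      refine ⟨s + 1, Fin.cons (0 : Fin (x.length + 1)) (Fin.succ ∘ I),
        Fin.cons (0 : Fin (y.length + 1)) (Fin.succ ∘ J),
        strictMono_cons_zero hI, strictMono_cons_zero hJ, ?_⟩
      rw [Fin.sum_univ_succ]
      simp only [Fin.cons_zero, Fin.cons_succ, Function.comp_apply]
      have ha : (a :: x).get (0 : Fin (x.length + 1)) = a := rfl
      have hb : (b :: y).get (0 : Fin (y.length + 1)) = b := rfl
      rw [ha, hb]
      have hsum : (∑ ℓ : Fin s, if (a :: x).get (I ℓ).succ ≠ (b :: y).get (J ℓ).succ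
            then 1 else 0)
          = ∑ ℓ, if x.get (I ℓ) ≠ y.get (J ℓ) then 1 else 0 := rfl
      rw [hsum, List.length_cons, List.length_cons]
      have he : (if a ≠ b then 1 else 0) = (if a = b then 0 else 1) := by
        by_cases hab : a = b <;> simp [hab]
      rw [he]
      omega
lemma A.cast' {x y : List (Fin k)} {c c' : ℕ} (h : A x y c) (e : c = c') : A x y c' := e ▸ h

lemma A_full (x y : List (Fin k)) : A x y (x.length + y.length) := by
  induction x with
  | nil =>
    induction y with
    | nil => simpa using A.nil
    | cons b ys ih => exact (A.right b ih).cast' (by simp)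
  | cons a xs ih => exact (A.left a (ih)).cast' (by simp; omega)

lemma A_of_align (x : List (Fin k)) : ∀ (y : List (Fin k)) (s : ℕ)
    (I : Fin s → Fin x.length) (J : Fin s → Fin y.length),
    StrictMono I → StrictMono J →
    A x y ((x.length - s) + (y.length - s) +
      ∑ ℓ, if x.get (I ℓ) ≠ y.get (J ℓ) then 1 else 0) := by
  induction x with
  | nil =>
    intro y s I J hI hJ
    cases s with
    | zero => simpa using A_full [] y
    | succ s => exact (I 0).elim0
  | cons a xs ihx =>
    intro y
    induction y with
    | nil =>
      intro s I J hI hJ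
      cases s with
      | zero => simpa using A_full (a :: xs) []
      | succ s => exact (J 0).elim0
    | cons b ys ihy =>
      intro s I J hI hJ
      cases s with
      | zero => simpa using A_full (a :: xs) (b :: ys)
      | succ s =>
        by_cases hI0 : I 0 = (0 : Fin (xs.length + 1))
        · by_cases hJ0 : J 0 = (0 : Fin (ys.length + 1))
          · -- pair case
            have hIne : ∀ ℓ : Fin s, I ℓ.succ ≠ (0 : Fin (xs.length + 1)) := fun ℓ =>
              Fin.pos_iff_ne_zero.mp (hI0 ▸ hI (Fin.succ_pos ℓ))
            have hJne : ∀ ℓ : Fin s, J ℓ.succ ≠ (0 : Fin (ys.length + 1)) := fun ℓ =>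
              Fin.pos_iff_ne_zero.mp (hJ0 ▸ hJ (Fin.succ_pos ℓ))
            set I' : Fin s → Fin xs.length := fun ℓ => (I ℓ.succ).pred (hIne ℓ) with hI'def
            set J' : Fin s → Fin ys.length := fun ℓ => (J ℓ.succ).pred (hJne ℓ) with hJ'def
            have hI' : StrictMono I' := fun i j hij => by
              simp only [hI'def, Fin.pred_lt_pred_iff]
              exact hI (Fin.succ_lt_succ_iff.mpr hij)
            have hJ' : StrictMono J' := fun i j hij => by
              simp only [hJ'def, Fin.pred_lt_pred_iff]
              exact hJ (Fin.succ_lt_succ_iff.mpr hij)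
            have h := A.pair a b (ihx ys s I' J' hI' hJ')
            refine h.cast' ?_
            rw [Fin.sum_univ_succ]
            have ha : (a :: xs).get (I 0) = a := by rw [hI0]; rfl
            have hb : (b :: ys).get (J 0) = b := by rw [hJ0]; rfl
            rw [ha, hb]
            have hsum : (∑ ℓ : Fin s, if (a :: xs).get (I ℓ.succ) ≠ (b :: ys).get (J ℓ.succ)
                  then 1 else 0)
                = ∑ ℓ, if xs.get (I' ℓ) ≠ ys.get (J' ℓ) then 1 else 0 := by
              refine Finset.sum_congr rfl fun ℓ _ => ?_
              have e1 : (a :: xs).get (I ℓ.succ) = xs.get (I' ℓ) := by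
                conv_lhs => rw [← Fin.succ_pred (I ℓ.succ) (hIne ℓ)]
                rfl
              have e2 : (b :: ys).get (J ℓ.succ) = ys.get (J' ℓ) := by
                conv_lhs => rw [← Fin.succ_pred (J ℓ.succ) (hJne ℓ)]
                rfl
              rw [e1, e2]
            rw [hsum]
            have he : (if a ≠ b then 1 else 0) = (if a = b then 0 else 1) := by
              by_cases hab : a = b <;> simp [hab]
            rw [he]
            simp only [List.length_cons, Nat.succ_sub_succ]
            omega
          · -- J 0 ≠ 0 : delete b from y (right step)
            have hJne : ∀ ℓ : Fin (s + 1), J ℓ ≠ (0 : Fin (ys.length + 1)) := fun ℓ =>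
              Fin.pos_iff_ne_zero.mp (lt_of_lt_of_le (Fin.pos_iff_ne_zero.mpr hJ0)
                (hJ.monotone (Fin.zero_le ℓ)))
            set J' : Fin (s + 1) → Fin ys.length := fun ℓ => (J ℓ).pred (hJne ℓ) with hJ'def
            have hJ' : StrictMono J' := fun i j hij => by
              simp only [hJ'def, Fin.pred_lt_pred_iff]; exact hJ hij
            have hsle : s + 1 ≤ ys.length := le_of_strictMono hJ'
            have h := A.right b (ihy (s + 1) I J' hI hJ')
            refine h.cast' ?_
            have hsum : (∑ ℓ : Fin (s + 1), if (a :: xs).get (I ℓ) ≠ ys.get (J' ℓ)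
                  then 1 else 0)
                = ∑ ℓ, if (a :: xs).get (I ℓ) ≠ (b :: ys).get (J ℓ) then 1 else 0 := by
              refine Finset.sum_congr rfl fun ℓ _ => ?_
              have e2 : (b :: ys).get (J ℓ) = ys.get (J' ℓ) := by
                conv_lhs => rw [← Fin.succ_pred (J ℓ) (hJne ℓ)]
                rfl
              rw [e2]
            rw [hsum]
            simp only [List.length_cons]
            omega
        · -- I 0 ≠ 0 : delete a from x (left step)
          have hIne : ∀ ℓ : Fin (s + 1), I ℓ ≠ (0 : Fin (xs.length + 1)) := fun ℓ =>
            Fin.pos_iff_ne_zero.mp (lt_of_lt_of_le (Fin.pos_iff_ne_zero.mpr hI0)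
              (hI.monotone (Fin.zero_le ℓ)))
          set I' : Fin (s + 1) → Fin xs.length := fun ℓ => (I ℓ).pred (hIne ℓ) with hI'def
          have hI' : StrictMono I' := fun i j hij => by
            simp only [hI'def, Fin.pred_lt_pred_iff]; exact hI hij
          have hsle : s + 1 ≤ xs.length := le_of_strictMono hI'
          have h := A.left a (ihx (b :: ys) (s + 1) I' J hI' hJ)
          refine h.cast' ?_
          have hsum : (∑ ℓ : Fin (s + 1), if xs.get (I' ℓ) ≠ (b :: ys).get (J ℓ)
                then 1 else 0)
              = ∑ ℓ, if (a :: xs).get (I ℓ) ≠ (b :: ys).get (J ℓ) then 1 else 0 := by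
            refine Finset.sum_congr rfl fun ℓ _ => ?_
            have e1 : (a :: xs).get (I ℓ) = xs.get (I' ℓ) := by
              conv_lhs => rw [← Fin.succ_pred (I ℓ) (hIne ℓ)]
              rfl
            rw [e1]
          rw [hsum]
          simp only [List.length_cons]
          omega


lemma strictMono_cast {m m' : ℕ} (e : m = m') : StrictMono (Fin.cast e) := fun i j h => by
  simp only [Fin.lt_def, Fin.coe_cast]
  exact h

end EditAux

/-- The edit distance between two strings of the same length `n` equals the minimum,
over all alignment lengths `s ≤ n` and all strictly increasing maps
`I J : Fin s → Fin n`, of `2·(n−s)` plus the number of aligned mismatches. -/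
theorem editDist_eq_min_over_alignments (k n : ℕ) (hk : 2 ≤ k)
    (x y : Fin n → Fin k) :
    editDist (List.ofFn x) (List.ofFn y) =
      sInf { v : ℕ | ∃ s : ℕ, s ≤ n ∧ ∃ I J : Fin s → Fin n,
        StrictMono I ∧ StrictMono J ∧
        v = 2 * (n - s) +
          (Finset.univ.filter (fun ℓ : Fin s => x (I ℓ) ≠ y (J ℓ))).card } := by
  have e : (List.ofFn x).length = n := List.length_ofFn
  have e' : (List.ofFn y).length = n := List.length_ofFn
  apply le_antisymm
  · refine le_csInf ⟨2 * (n - 0) + (Finset.univ.filter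
      (fun ℓ : Fin 0 => x (Fin.elim0 ℓ) ≠ y (Fin.elim0 ℓ))).card,
      0, Nat.zero_le n, Fin.elim0, Fin.elim0, fun i => i.elim0, fun i => i.elim0, rfl⟩ ?_
    rintro v ⟨s, hs, I, J, hI, hJ, rfl⟩
    have hI' : StrictMono (fun ℓ => Fin.cast e.symm (I ℓ)) :=
      (EditAux.strictMono_cast e.symm).comp hI
    have hJ' : StrictMono (fun ℓ => Fin.cast e'.symm (J ℓ)) :=
      (EditAux.strictMono_cast e'.symm).comp hJ
    have h := EditAux.editDist_le_of_A
      (EditAux.A_of_align (List.ofFn x) (List.ofFn y) s _ _ hI' hJ')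
    have hsum : (∑ ℓ : Fin s, if (List.ofFn x).get (Fin.cast e.symm (I ℓ)) ≠
          (List.ofFn y).get (Fin.cast e'.symm (J ℓ)) then 1 else 0)
        = (Finset.univ.filter (fun ℓ : Fin s => x (I ℓ) ≠ y (J ℓ))).card := by
      rw [Finset.card_filter]
      refine Finset.sum_congr rfl fun ℓ _ => ?_
      have g1 : (List.ofFn x).get (Fin.cast e.symm (I ℓ)) = x (I ℓ) := by
        rw [List.get_ofFn]; rfl
      have g2 : (List.ofFn y).get (Fin.cast e'.symm (J ℓ)) = y (J ℓ) := by
        rw [List.get_ofFn]; rfl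
      rw [g1, g2]
    have hval : ((List.ofFn x).length - s) + ((List.ofFn y).length - s) +
        (∑ ℓ : Fin s, if (List.ofFn x).get (Fin.cast e.symm (I ℓ)) ≠
          (List.ofFn y).get (Fin.cast e'.symm (J ℓ)) then 1 else 0)
        = 2 * (n - s) + (Finset.univ.filter (fun ℓ : Fin s => x (I ℓ) ≠ y (J ℓ))).card := by
      rw [hsum]; omega
    exact le_trans h (le_of_eq hval)
  · obtain ⟨s, I, J, hI, hJ, hc⟩ :=
      EditAux.align_of_A (EditAux.A_editDist (List.ofFn x) (List.ofFn y))
    have hsum : (∑ ℓ : Fin s, if (List.ofFn x).get (I ℓ) ≠ (List.ofFn y).get (J ℓ)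
          then 1 else 0)
        = (Finset.univ.filter
            (fun ℓ : Fin s => x (Fin.cast e (I ℓ)) ≠ y (Fin.cast e' (J ℓ)))).card := by
      rw [Finset.card_filter]
      refine Finset.sum_congr rfl fun ℓ _ => ?_
      have g1 : (List.ofFn x).get (I ℓ) = x (Fin.cast e (I ℓ)) := by
        rw [List.get_ofFn]
      have g2 : (List.ofFn y).get (J ℓ) = y (Fin.cast e' (J ℓ)) := by
        rw [List.get_ofFn]
      rw [g1, g2]
    have hval : editDist (List.ofFn x) (List.ofFn y) = 2 * (n - s) +
        (Finset.univ.filter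
          (fun ℓ : Fin s => x (Fin.cast e (I ℓ)) ≠ y (Fin.cast e' (J ℓ)))).card := by
      rw [hc, hsum]; omega
    exact Nat.sInf_le ⟨s, e ▸ EditAux.le_of_strictMono hI,
      fun ℓ => Fin.cast e (I ℓ), fun ℓ => Fin.cast e' (J ℓ),
      (EditAux.strictMono_cast e).comp hI, (EditAux.strictMono_cast e').comp hJ, hval⟩
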